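/- Let n > 3 and let (P,·) = μ₁,₂ⁿ. Then Z²(P,P) consists exactly of the maps θ of the form θ(x,y) = α·Δ₁,ₙ(x,y)·e_{n−1} for some α ∈ ℂ. -/

import Mathlib

open scoped BigOperators

/-- The bilinear map on `Fin n → ℂ` determined by structure constants `c`. -/
noncomputable def sb {n : ℕ} (c : Fin n → Fin n → Fin n → ℂ) :
    (Fin n → ℂ) →ₗ[ℂ] (Fin n → ℂ) →ₗ[ℂ] (Fin n → ℂ) :=
  LinearMap.mk₂ ℂ (fun x y k => ∑ a, ∑ b, c a b k * (x a * y b))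
    (fun x x' y => by
      funext k
      simp [add_mul, mul_add, Finset.sum_add_distrib])
    (fun r x y => by
      funext k
      simp only [Pi.smul_apply, smul_eq_mul, Finset.mul_sum]
      exact Finset.sum_congr rfl fun a _ => Finset.sum_congr rfl fun b _ => by ring)
    (fun x y y' => by
      funext k
      simp [mul_add, Finset.sum_add_distrib])
    (fun r x y => by
      funext k
      simp only [Pi.smul_apply, smul_eq_mul, Finset.mul_sum]
      exact Finset.sum_congr rfl fun a _ => Finset.sum_congr rfl fun b _ => by ring)

/-- The multiplication of the filiform algebra `μ₁,₂ⁿ`: with 1-based basis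
`e₁,…,eₙ`, `e_i · e_j = e_{i+j}` for `2 ≤ i+j ≤ n−1`, `i,j ≤ n−1`, together with
`eₙ·eₙ = e_{n−1}`; all other products of basis vectors are zero. -/
noncomputable def mu12 (n : ℕ) : (Fin n → ℂ) →ₗ[ℂ] (Fin n → ℂ) →ₗ[ℂ] (Fin n → ℂ) :=
  sb (fun a b k =>
    (if (a : ℕ) + (b : ℕ) + 1 = (k : ℕ) ∧ (k : ℕ) + 2 ≤ n then 1 else 0) +
    (if (a : ℕ) + 1 = n ∧ (b : ℕ) + 1 = n ∧ (k : ℕ) + 2 = n then 1 else 0))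



lemma mu12_apply (n : ℕ) (x y : Fin n → ℂ) (k : Fin n) :
    mu12 n x y k =
      ∑ a : Fin n, ∑ b : Fin n,
        ((if (a : ℕ) + (b : ℕ) + 1 = (k : ℕ) ∧ (k : ℕ) + 2 ≤ n then (1:ℂ) else 0) +
         (if (a : ℕ) + 1 = n ∧ (b : ℕ) + 1 = n ∧ (k : ℕ) + 2 = n then (1:ℂ) else 0)) *
        (x a * y b) := rfl

lemma mu12_comm (n : ℕ) (x y : Fin n → ℂ) : mu12 n x y = mu12 n y x := by
  funext k
  rw [mu12_apply, mu12_apply, Finset.sum_comm]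
  refine Finset.sum_congr rfl fun a _ => Finset.sum_congr rfl fun b _ => ?_
  have h1 : ((b:ℕ) + (a:ℕ) + 1 = (k:ℕ) ∧ (k:ℕ) + 2 ≤ n) ↔
      ((a:ℕ) + (b:ℕ) + 1 = (k:ℕ) ∧ (k:ℕ) + 2 ≤ n) := by omega
  have h2 : ((b:ℕ) + 1 = n ∧ (a:ℕ) + 1 = n ∧ (k:ℕ) + 2 = n) ↔
      ((a:ℕ) + 1 = n ∧ (b:ℕ) + 1 = n ∧ (k:ℕ) + 2 = n) := by tauto
  rw [if_congr h1 rfl rfl, if_congr h2 rfl rfl]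
  ring

lemma mu12_single_left (n : ℕ) (i : Fin n) (v : Fin n → ℂ) (k : Fin n) :
    mu12 n (Pi.single i 1) v k =
      ∑ b : Fin n, ((if (i:ℕ) + (b:ℕ) + 1 = (k:ℕ) ∧ (k:ℕ) + 2 ≤ n then (1:ℂ) else 0) +
            (if (i:ℕ) + 1 = n ∧ (b:ℕ) + 1 = n ∧ (k:ℕ) + 2 = n then (1:ℂ) else 0)) * v b := by
  rw [mu12_apply, Finset.sum_eq_single i]
  · exact Finset.sum_congr rfl fun b _ => by rw [Pi.single_eq_same, one_mul]
  · intro a _ ha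
    refine Finset.sum_eq_zero fun b _ => ?_
    rw [Pi.single_eq_of_ne ha, zero_mul, mul_zero]
  · intro h; exact absurd (Finset.mem_univ i) h

lemma mu12_e0 (n : ℕ) (hn : 3 < n) (v : Fin n → ℂ) (k : Fin n) :
    mu12 n (Pi.single (⟨0, Nat.zero_lt_of_lt hn⟩ : Fin n) 1) v k =
      if h : 1 ≤ (k:ℕ) ∧ (k:ℕ) + 2 ≤ n then v ⟨(k:ℕ) - 1, by omega⟩ else 0 := by
  rw [mu12_single_left]
  by_cases h : 1 ≤ (k:ℕ) ∧ (k:ℕ) + 2 ≤ n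
  · rw [dif_pos h, Finset.sum_eq_single (⟨(k:ℕ) - 1, by omega⟩ : Fin n)]
    · have c1 : ((⟨0, Nat.zero_lt_of_lt hn⟩ : Fin n):ℕ) + ((⟨(k:ℕ) - 1, by omega⟩ : Fin n):ℕ) + 1 = (k:ℕ) ∧ (k:ℕ) + 2 ≤ n := by
        simp only [Fin.val_mk]; omega
      have c2 : ¬(((⟨0, Nat.zero_lt_of_lt hn⟩ : Fin n):ℕ) + 1 = n ∧ ((⟨(k:ℕ) - 1, by omega⟩ : Fin n):ℕ) + 1 = n ∧ (k:ℕ) + 2 = n) := by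
        simp only [Fin.val_mk]; omega
      rw [if_pos c1, if_neg c2, add_zero, one_mul]
    · intro b _ hb
      have c1 : ¬(((⟨0, Nat.zero_lt_of_lt hn⟩ : Fin n):ℕ) + (b:ℕ) + 1 = (k:ℕ) ∧ (k:ℕ) + 2 ≤ n) := by
        simp only [Fin.val_mk]
        intro hc
        exact hb (Fin.ext (by simp only [Fin.val_mk]; omega))
      have c2 : ¬(((⟨0, Nat.zero_lt_of_lt hn⟩ : Fin n):ℕ) + 1 = n ∧ (b:ℕ) + 1 = n ∧ (k:ℕ) + 2 = n) := by
        simp only [Fin.val_mk]; omega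
      rw [if_neg c1, if_neg c2, add_zero, zero_mul]
    · intro h; exact absurd (Finset.mem_univ _) h
  · rw [dif_neg h]
    refine Finset.sum_eq_zero fun b _ => ?_
    have c1 : ¬(((⟨0, Nat.zero_lt_of_lt hn⟩ : Fin n):ℕ) + (b:ℕ) + 1 = (k:ℕ) ∧ (k:ℕ) + 2 ≤ n) := by
      simp only [Fin.val_mk]; omega
    have c2 : ¬(((⟨0, Nat.zero_lt_of_lt hn⟩ : Fin n):ℕ) + 1 = n ∧ (b:ℕ) + 1 = n ∧ (k:ℕ) + 2 = n) := by
      simp only [Fin.val_mk]; omega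
    rw [if_neg c1, if_neg c2, add_zero, zero_mul]

lemma mu12_eN1 (n : ℕ) (hn : 3 < n) (v : Fin n → ℂ) (k : Fin n) :
    mu12 n (Pi.single (⟨n - 1, Nat.sub_lt (Nat.zero_lt_of_lt hn) Nat.one_pos⟩ : Fin n) 1) v k =
      if (k:ℕ) = n - 2 then v ⟨n - 1, Nat.sub_lt (Nat.zero_lt_of_lt hn) Nat.one_pos⟩ else 0 := by
  rw [mu12_single_left]
  by_cases h : (k:ℕ) = n - 2
  · rw [if_pos h, Finset.sum_eq_single (⟨n - 1, Nat.sub_lt (Nat.zero_lt_of_lt hn) Nat.one_pos⟩ : Fin n)]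
    · have c1 : ¬(((⟨n - 1, Nat.sub_lt (Nat.zero_lt_of_lt hn) Nat.one_pos⟩ : Fin n):ℕ) + ((⟨n - 1, Nat.sub_lt (Nat.zero_lt_of_lt hn) Nat.one_pos⟩ : Fin n):ℕ) + 1 = (k:ℕ) ∧ (k:ℕ) + 2 ≤ n) := by
        simp only [Fin.val_mk]; omega
      have c2 : ((⟨n - 1, Nat.sub_lt (Nat.zero_lt_of_lt hn) Nat.one_pos⟩ : Fin n):ℕ) + 1 = n ∧ ((⟨n - 1, Nat.sub_lt (Nat.zero_lt_of_lt hn) Nat.one_pos⟩ : Fin n):ℕ) + 1 = n ∧ (k:ℕ) + 2 = n := by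
        simp only [Fin.val_mk]; omega
      rw [if_neg c1, if_pos c2, zero_add, one_mul]
    · intro b _ hb
      have hb' : (b:ℕ) ≠ n - 1 := fun hc => hb (Fin.ext (by simp only [Fin.val_mk]; omega))
      have c1 : ¬(((⟨n - 1, Nat.sub_lt (Nat.zero_lt_of_lt hn) Nat.one_pos⟩ : Fin n):ℕ) + (b:ℕ) + 1 = (k:ℕ) ∧ (k:ℕ) + 2 ≤ n) := by
        simp only [Fin.val_mk]; omega
      have c2 : ¬(((⟨n - 1, Nat.sub_lt (Nat.zero_lt_of_lt hn) Nat.one_pos⟩ : Fin n):ℕ) + 1 = n ∧ (b:ℕ) + 1 = n ∧ (k:ℕ) + 2 = n) := by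
        simp only [Fin.val_mk]; omega
      rw [if_neg c1, if_neg c2, add_zero, zero_mul]
    · intro h; exact absurd (Finset.mem_univ _) h
  · rw [if_neg h]
    refine Finset.sum_eq_zero fun b _ => ?_
    have c1 : ¬(((⟨n - 1, Nat.sub_lt (Nat.zero_lt_of_lt hn) Nat.one_pos⟩ : Fin n):ℕ) + (b:ℕ) + 1 = (k:ℕ) ∧ (k:ℕ) + 2 ≤ n) := by
      simp only [Fin.val_mk]; omega
    have c2 : ¬(((⟨n - 1, Nat.sub_lt (Nat.zero_lt_of_lt hn) Nat.one_pos⟩ : Fin n):ℕ) + 1 = n ∧ (b:ℕ) + 1 = n ∧ (k:ℕ) + 2 = n) := by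
      simp only [Fin.val_mk]; omega
    rw [if_neg c1, if_neg c2, add_zero, zero_mul]

lemma mu12_eN2 (n : ℕ) (hn : 3 < n) (v : Fin n → ℂ) :
    mu12 n (Pi.single (⟨n - 2, Nat.sub_lt (Nat.zero_lt_of_lt hn) Nat.two_pos⟩ : Fin n) 1) v = 0 := by
  funext k
  rw [mu12_single_left]
  refine Finset.sum_eq_zero fun b _ => ?_
  have c1 : ¬(((⟨n - 2, Nat.sub_lt (Nat.zero_lt_of_lt hn) Nat.two_pos⟩ : Fin n):ℕ) + (b:ℕ) + 1 = (k:ℕ) ∧ (k:ℕ) + 2 ≤ n) := by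
    simp only [Fin.val_mk]; omega
  have c2 : ¬(((⟨n - 2, Nat.sub_lt (Nat.zero_lt_of_lt hn) Nat.two_pos⟩ : Fin n):ℕ) + 1 = n ∧ (b:ℕ) + 1 = n ∧ (k:ℕ) + 2 = n) := by
    simp only [Fin.val_mk]; omega
  rw [if_neg c1, if_neg c2, add_zero, zero_mul]

lemma mu12_eN2' (n : ℕ) (hn : 3 < n) (v : Fin n → ℂ) :
    mu12 n v (Pi.single (⟨n - 2, Nat.sub_lt (Nat.zero_lt_of_lt hn) Nat.two_pos⟩ : Fin n) 1) = 0 := by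
  rw [← mu12_comm]; exact mu12_eN2 n hn v

lemma mu12_at0 (n : ℕ) (hn : 3 < n) (x y : Fin n → ℂ) :
    mu12 n x y ⟨0, Nat.zero_lt_of_lt hn⟩ = 0 := by
  rw [mu12_apply]
  refine Finset.sum_eq_zero fun a _ => Finset.sum_eq_zero fun b _ => ?_
  have c1 : ¬((a:ℕ) + (b:ℕ) + 1 = ((⟨0, Nat.zero_lt_of_lt hn⟩ : Fin n):ℕ) ∧ ((⟨0, Nat.zero_lt_of_lt hn⟩ : Fin n):ℕ) + 2 ≤ n) := by
    simp only [Fin.val_mk]; omega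
  have c2 : ¬((a:ℕ) + 1 = n ∧ (b:ℕ) + 1 = n ∧ ((⟨0, Nat.zero_lt_of_lt hn⟩ : Fin n):ℕ) + 2 = n) := by
    simp only [Fin.val_mk]; omega
  rw [if_neg c1, if_neg c2, add_zero, zero_mul]

lemma mu12_atN1 (n : ℕ) (hn : 3 < n) (x y : Fin n → ℂ) :
    mu12 n x y ⟨n - 1, Nat.sub_lt (Nat.zero_lt_of_lt hn) Nat.one_pos⟩ = 0 := by
  rw [mu12_apply]
  refine Finset.sum_eq_zero fun a _ => Finset.sum_eq_zero fun b _ => ?_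
  have c1 : ¬((a:ℕ) + (b:ℕ) + 1 = ((⟨n - 1, Nat.sub_lt (Nat.zero_lt_of_lt hn) Nat.one_pos⟩ : Fin n):ℕ) ∧ ((⟨n - 1, Nat.sub_lt (Nat.zero_lt_of_lt hn) Nat.one_pos⟩ : Fin n):ℕ) + 2 ≤ n) := by
    simp only [Fin.val_mk]; omega
  have c2 : ¬((a:ℕ) + 1 = n ∧ (b:ℕ) + 1 = n ∧ ((⟨n - 1, Nat.sub_lt (Nat.zero_lt_of_lt hn) Nat.one_pos⟩ : Fin n):ℕ) + 2 = n) := by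
    simp only [Fin.val_mk]; omega
  rw [if_neg c1, if_neg c2, add_zero, zero_mul]

/-- Canonical index `0` in `Fin n`. -/
def i0 (n : ℕ) (_hn : 3 < n) : Fin n := ⟨0, Nat.zero_lt_of_lt _hn⟩
/-- Canonical index `n-1` in `Fin n`. -/
def iN1 (n : ℕ) (_hn : 3 < n) : Fin n := ⟨n - 1, Nat.sub_lt (Nat.zero_lt_of_lt _hn) Nat.one_pos⟩
/-- Canonical index `n-2` in `Fin n`. -/
def iN2 (n : ℕ) (_hn : 3 < n) : Fin n := ⟨n - 2, Nat.sub_lt (Nat.zero_lt_of_lt _hn) Nat.two_pos⟩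

lemma mul_i0 (n : ℕ) (hn : 3 < n) (v : Fin n → ℂ) (k : Fin n) :
    mu12 n (Pi.single (i0 n hn) 1) v k =
      if h : 1 ≤ (k:ℕ) ∧ (k:ℕ) + 2 ≤ n then v ⟨(k:ℕ) - 1, by omega⟩ else 0 :=
  mu12_e0 n hn v k

lemma mul_iN1 (n : ℕ) (hn : 3 < n) (v : Fin n → ℂ) (k : Fin n) :
    mu12 n (Pi.single (iN1 n hn) 1) v k =
      if (k:ℕ) = n - 2 then v (iN1 n hn) else 0 :=
  mu12_eN1 n hn v k

lemma mul_iN2 (n : ℕ) (hn : 3 < n) (v : Fin n → ℂ) :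
    mu12 n (Pi.single (iN2 n hn) 1) v = 0 :=
  mu12_eN2 n hn v

lemma mul_iN2' (n : ℕ) (hn : 3 < n) (v : Fin n → ℂ) :
    mu12 n v (Pi.single (iN2 n hn) 1) = 0 :=
  mu12_eN2' n hn v

lemma mul_at0 (n : ℕ) (hn : 3 < n) (x y : Fin n → ℂ) :
    mu12 n x y (i0 n hn) = 0 :=
  mu12_at0 n hn x y

lemma mul_atN1 (n : ℕ) (hn : 3 < n) (x y : Fin n → ℂ) :
    mu12 n x y (iN1 n hn) = 0 :=
  mu12_atN1 n hn x y
lemma mu12_e0_em (n : ℕ) (hn : 3 < n) (m : ℕ) (hm : m + 1 ≤ n - 2) :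
    mu12 n (Pi.single (⟨0, Nat.zero_lt_of_lt hn⟩ : Fin n) 1) (Pi.single (⟨m, by omega⟩ : Fin n) 1) =
      Pi.single (⟨m + 1, by omega⟩ : Fin n) 1 := by
  funext k
  rw [mu12_e0 n hn]
  by_cases h : 1 ≤ (k:ℕ) ∧ (k:ℕ) + 2 ≤ n
  · rw [dif_pos h]
    simp only [Pi.single_apply, Fin.ext_iff, Fin.val_mk]
    split_ifs <;> first | rfl | omega
  · rw [dif_neg h]
    simp only [Pi.single_apply, Fin.ext_iff, Fin.val_mk]
    split_ifs with hc
    · exact absurd ⟨by omega, by omega⟩ h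
    · rfl

lemma mu12_e0_eN1 (n : ℕ) (hn : 3 < n) :
    mu12 n (Pi.single (⟨0, Nat.zero_lt_of_lt hn⟩ : Fin n) 1) (Pi.single (⟨n - 1, Nat.sub_lt (Nat.zero_lt_of_lt hn) Nat.one_pos⟩ : Fin n) 1) = 0 := by
  funext k
  rw [mu12_e0 n hn]
  by_cases h : 1 ≤ (k:ℕ) ∧ (k:ℕ) + 2 ≤ n
  · rw [dif_pos h]
    simp only [Pi.single_apply, Fin.ext_iff, Fin.val_mk]
    rw [if_neg (by omega)]
    rfl
  · rw [dif_neg h]; rfl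

lemma mu12_eN1_eN1 (n : ℕ) (hn : 3 < n) :
    mu12 n (Pi.single (⟨n - 1, Nat.sub_lt (Nat.zero_lt_of_lt hn) Nat.one_pos⟩ : Fin n) 1) (Pi.single (⟨n - 1, Nat.sub_lt (Nat.zero_lt_of_lt hn) Nat.one_pos⟩ : Fin n) 1) =
      Pi.single (⟨n - 2, Nat.sub_lt (Nat.zero_lt_of_lt hn) Nat.two_pos⟩ : Fin n) 1 := by
  funext k
  rw [mu12_eN1 n hn]
  simp only [Pi.single_apply, Fin.ext_iff, Fin.val_mk]
  split_ifs <;> first | rfl | omega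

/-- The standard coboundary-type map `θ(x,y) = α Δ(x,y) e_{n-2}` as a bundled bilinear map. -/
noncomputable def thetaStd (n : ℕ) (hn : 3 < n) (α : ℂ) :
    (Fin n → ℂ) →ₗ[ℂ] (Fin n → ℂ) →ₗ[ℂ] (Fin n → ℂ) :=
  LinearMap.mk₂ ℂ (fun x y =>
      (α * (x ⟨0, Nat.zero_lt_of_lt hn⟩ * y ⟨n - 1, Nat.sub_lt (Nat.zero_lt_of_lt hn) Nat.one_pos⟩ - x ⟨n - 1, Nat.sub_lt (Nat.zero_lt_of_lt hn) Nat.one_pos⟩ * y ⟨0, Nat.zero_lt_of_lt hn⟩)) •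
        (Pi.single (⟨n - 2, Nat.sub_lt (Nat.zero_lt_of_lt hn) Nat.two_pos⟩ : Fin n) (1 : ℂ) : Fin n → ℂ))
    (fun x x' y => by
      simp only [Pi.add_apply]; rw [← add_smul]; congr 1; ring)
    (fun r x y => by
      simp only [Pi.smul_apply, smul_eq_mul]; rw [smul_smul]; congr 1; ring)
    (fun x y y' => by
      simp only [Pi.add_apply]; rw [← add_smul]; congr 1; ring)
    (fun r x y => by
      simp only [Pi.smul_apply, smul_eq_mul]; rw [smul_smul]; congr 1; ring)

lemma thetaStd_apply (n : ℕ) (hn : 3 < n) (α : ℂ) (x y : Fin n → ℂ) :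
    thetaStd n hn α x y =
      (α * (x ⟨0, Nat.zero_lt_of_lt hn⟩ * y ⟨n - 1, Nat.sub_lt (Nat.zero_lt_of_lt hn) Nat.one_pos⟩ - x ⟨n - 1, Nat.sub_lt (Nat.zero_lt_of_lt hn) Nat.one_pos⟩ * y ⟨0, Nat.zero_lt_of_lt hn⟩)) •
        (Pi.single (⟨n - 2, Nat.sub_lt (Nat.zero_lt_of_lt hn) Nat.two_pos⟩ : Fin n) (1 : ℂ) : Fin n → ℂ) := rfl

lemma bilin_ext (n : ℕ) (f g : (Fin n → ℂ) →ₗ[ℂ] (Fin n → ℂ) →ₗ[ℂ] (Fin n → ℂ))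
    (h : ∀ i j : Fin n, f (Pi.single i 1) (Pi.single j 1) = g (Pi.single i 1) (Pi.single j 1)) :
    f = g := by
  apply Module.Basis.ext (Pi.basisFun ℂ (Fin n))
  intro i
  apply Module.Basis.ext (Pi.basisFun ℂ (Fin n))
  intro j
  simpa [Pi.basisFun_apply, Pi.single] using h i j

lemma mul_step (n : ℕ) (hn : 3 < n) (j k : Fin n) (hjk : (j:ℕ) + 1 = (k:ℕ))
    (hk : (k:ℕ) ≤ n - 2) :
    mu12 n (Pi.single (i0 n hn) 1) (Pi.single j 1) = Pi.single k 1 := by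
  rw [show j = (⟨(j:ℕ), j.isLt⟩ : Fin n) from Fin.ext rfl,
    show k = (⟨(j:ℕ) + 1, by omega⟩ : Fin n) from Fin.ext (show (k:ℕ) = (j:ℕ) + 1 by omega)]
  exact mu12_e0_em n hn (j:ℕ) (by omega)

lemma mul_i0_iN1 (n : ℕ) (hn : 3 < n) :
    mu12 n (Pi.single (i0 n hn) 1) (Pi.single (iN1 n hn) 1) = 0 :=
  mu12_e0_eN1 n hn

lemma mul_iN1_iN1 (n : ℕ) (hn : 3 < n) :
    mu12 n (Pi.single (iN1 n hn) 1) (Pi.single (iN1 n hn) 1) = Pi.single (iN2 n hn) 1 :=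
  mu12_eN1_eN1 n hn

/-- For n > 3, Z²(μ₁,₂ⁿ, μ₁,₂ⁿ) consists exactly of the maps
`θ(x,y) = α Δ₁ₙ(x,y) e_{n−1}` with `α ∈ ℂ`. -/
theorem stmt8 (n : ℕ) (hn : 3 < n)
    (θ : (Fin n → ℂ) →ₗ[ℂ] (Fin n → ℂ) →ₗ[ℂ] (Fin n → ℂ)) :
    ((∀ x y, θ x y = - θ y x) ∧
     (∀ x y z, θ (θ x y) z + θ (θ y z) x + θ (θ z x) y = 0) ∧
     (∀ x y z, θ (mu12 n x y) z = mu12 n (θ x z) y + mu12 n x (θ y z))) ↔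
    ∃ α : ℂ, ∀ x y : Fin n → ℂ,
      θ x y =
        (α * (x ⟨0, by omega⟩ * y ⟨n - 1, by omega⟩ -
              x ⟨n - 1, by omega⟩ * y ⟨0, by omega⟩)) •
            (Pi.single (⟨n - 2, by omega⟩ : Fin n) (1 : ℂ) : Fin n → ℂ) := by
  constructor
  · rintro ⟨hskew, -, hco⟩
    have skew0 : ∀ v, θ v v = 0 := by
      intro v
      have h := hskew v v
      have h2 : θ v v + θ v v = 0 := by nth_rewrite 1 [h]; exact neg_add_cancel _
      have h3 : (2:ℂ) • θ v v = 0 := by rw [two_smul]; exact h2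
      rcases smul_eq_zero.mp h3 with h4 | h4
      · exact absurd h4 two_ne_zero
      · exact h4
    -- Step B : θ(e_j, e_0) = 0 for val j ≤ n-2
    have hB : ∀ j : Fin n, (j:ℕ) ≤ n - 2 → θ (Pi.single j 1) (Pi.single (i0 n hn) 1) = 0 := by
      suffices H : ∀ m : ℕ, ∀ j : Fin n, (j:ℕ) = m → m ≤ n - 2 →
          θ (Pi.single j 1) (Pi.single (i0 n hn) 1) = 0 by
        intro j hj; exact H (j:ℕ) j rfl hj
      intro m
      induction m with
      | zero =>
        intro j hj _
        rw [show j = i0 n hn from Fin.ext hj]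
        exact skew0 _
      | succ m ih =>
        intro j hj hm
        have h' : m < n := by omega
        have hit := hco (Pi.single (i0 n hn) 1) (Pi.single (⟨m, h'⟩ : Fin n) 1)
          (Pi.single (i0 n hn) 1)
        rw [mul_step n hn (⟨m, h'⟩ : Fin n) j (show m + 1 = (j:ℕ) by omega) (by omega),
          skew0 (Pi.single (i0 n hn) 1), ih (⟨m, h'⟩ : Fin n) rfl (by omega)] at hit
        simpa using hit
    -- e_0 · θ(e_{n-1}, e_0) = 0
    have hw1 : mu12 n (Pi.single (i0 n hn) 1)
        (θ (Pi.single (iN1 n hn) 1) (Pi.single (i0 n hn) 1)) = 0 := by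
      have hit := hco (Pi.single (i0 n hn) 1) (Pi.single (iN1 n hn) 1) (Pi.single (i0 n hn) 1)
      rw [mul_i0_iN1 n hn, skew0 (Pi.single (i0 n hn) 1)] at hit
      simpa using hit.symm
    -- low components of θ(e_{n-1}, e_0) vanish
    have hwlow : ∀ k : Fin n, (k:ℕ) ≤ n - 3 →
        θ (Pi.single (iN1 n hn) 1) (Pi.single (i0 n hn) 1) k = 0 := by
      intro k hk
      have hc := congrFun hw1 (⟨(k:ℕ) + 1, by omega⟩ : Fin n)
      rw [mul_i0 n hn, dif_pos (show 1 ≤ (k:ℕ) + 1 ∧ (k:ℕ) + 1 + 2 ≤ n by omega)] at hc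
      exact hc
    -- top component of θ(e_{n-1}, e_0) vanishes
    have hwtop : θ (Pi.single (iN1 n hn) 1) (Pi.single (i0 n hn) 1) (iN1 n hn) = 0 := by
      have hit := hco (Pi.single (iN1 n hn) 1) (Pi.single (iN1 n hn) 1) (Pi.single (i0 n hn) 1)
      rw [mul_iN1_iN1 n hn, hB (iN2 n hn) (show n - 2 ≤ n - 2 by omega),
        mu12_comm n (θ (Pi.single (iN1 n hn) 1) (Pi.single (i0 n hn) 1))
          (Pi.single (iN1 n hn) 1)] at hit
      have hX : mu12 n (Pi.single (iN1 n hn) 1)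
          (θ (Pi.single (iN1 n hn) 1) (Pi.single (i0 n hn) 1)) = 0 := by
        have h3 := hit.symm
        rw [← two_smul ℂ] at h3
        rcases smul_eq_zero.mp h3 with h4 | h4
        · exact absurd h4 two_ne_zero
        · exact h4
      have hc := congrFun hX (iN2 n hn)
      rw [mul_iN1 n hn, if_pos (show ((iN2 n hn : Fin n):ℕ) = n - 2 from rfl)] at hc
      simpa using hc
    obtain ⟨α, hα⟩ : ∃ a : ℂ,
        θ (Pi.single (iN1 n hn) 1) (Pi.single (i0 n hn) 1) (iN2 n hn) = -a :=
      ⟨-(θ (Pi.single (iN1 n hn) 1) (Pi.single (i0 n hn) 1) (iN2 n hn)), by ring⟩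
    have hN0 : θ (Pi.single (iN1 n hn) 1) (Pi.single (i0 n hn) 1) =
        (-α) • (Pi.single (iN2 n hn) (1:ℂ) : Fin n → ℂ) := by
      funext k
      by_cases hk : (k:ℕ) = n - 2
      · rw [show k = iN2 n hn from Fin.ext hk, hα, Pi.smul_apply, Pi.single_eq_same,
          smul_eq_mul, mul_one]
      · rw [Pi.smul_apply, Pi.single_eq_of_ne (show k ≠ iN2 n hn from Fin.ne_of_val_ne hk),
          smul_zero]
        by_cases hk2 : (k:ℕ) = n - 1
        · rw [show k = iN1 n hn from Fin.ext hk2]; exact hwtop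
        · exact hwlow k (by have := k.isLt; omega)
    have h0N : θ (Pi.single (i0 n hn) 1) (Pi.single (iN1 n hn) 1) =
        α • (Pi.single (iN2 n hn) (1:ℂ) : Fin n → ℂ) := by
      rw [hskew (Pi.single (i0 n hn) 1) (Pi.single (iN1 n hn) 1), hN0, neg_smul, neg_neg]
    -- Step C : θ(e_i, e_j) = 0 for val i, val j ≤ n-2
    have hC : ∀ j : Fin n, (j:ℕ) ≤ n - 2 → ∀ i : Fin n, (i:ℕ) ≤ n - 2 →
        θ (Pi.single i 1) (Pi.single j 1) = 0 := by
      intro j hj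
      suffices H : ∀ m : ℕ, ∀ i : Fin n, (i:ℕ) = m → m ≤ n - 2 →
          θ (Pi.single i 1) (Pi.single j 1) = 0 by
        intro i hi; exact H (i:ℕ) i rfl hi
      intro m
      induction m with
      | zero =>
        intro i hi _
        rw [show i = i0 n hn from Fin.ext hi, hskew (Pi.single (i0 n hn) 1) (Pi.single j 1),
          hB j hj, neg_zero]
      | succ m ih =>
        intro i hi hm
        have h' : m < n := by omega
        have hit := hco (Pi.single (i0 n hn) 1) (Pi.single (⟨m, h'⟩ : Fin n) 1) (Pi.single j 1)
        rw [mul_step n hn (⟨m, h'⟩ : Fin n) i (show m + 1 = (i:ℕ) by omega) (by omega),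
          ih (⟨m, h'⟩ : Fin n) rfl (by omega)] at hit
        have hbase : θ (Pi.single (i0 n hn) 1) (Pi.single j 1) = 0 := by
          rw [hskew (Pi.single (i0 n hn) 1) (Pi.single j 1), hB j hj, neg_zero]
        rw [hbase] at hit
        simpa using hit
    -- Step D : θ(e_i, e_{n-1}) = 0 for 1 ≤ val i ≤ n-2
    have hD : ∀ i : Fin n, 1 ≤ (i:ℕ) → (i:ℕ) ≤ n - 2 →
        θ (Pi.single i 1) (Pi.single (iN1 n hn) 1) = 0 := by
      suffices H : ∀ m : ℕ, ∀ i : Fin n, (i:ℕ) = m → 1 ≤ m → m ≤ n - 2 →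
          θ (Pi.single i 1) (Pi.single (iN1 n hn) 1) = 0 by
        intro i h1 h2; exact H (i:ℕ) i rfl h1 h2
      intro m
      induction m with
      | zero => intro i _ h1 _; omega
      | succ m ih =>
        intro i hi _ hm
        by_cases hm0 : m = 0
        · subst hm0
          have hit := hco (Pi.single (i0 n hn) 1) (Pi.single (i0 n hn) 1)
            (Pi.single (iN1 n hn) 1)
          rw [mul_step n hn (i0 n hn) i (show 0 + 1 = (i:ℕ) by omega) (by omega), h0N] at hit
          rw [map_smul, LinearMap.smul_apply, mul_iN2 n hn, map_smul, mul_iN2' n hn] at hit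
          simpa using hit
        · have h' : m < n := by omega
          have hit := hco (Pi.single (i0 n hn) 1) (Pi.single (⟨m, h'⟩ : Fin n) 1)
            (Pi.single (iN1 n hn) 1)
          rw [mul_step n hn (⟨m, h'⟩ : Fin n) i (show m + 1 = (i:ℕ) by omega) (by omega),
            ih (⟨m, h'⟩ : Fin n) rfl (by omega) (by omega), h0N] at hit
          rw [map_smul, LinearMap.smul_apply, mul_iN2 n hn] at hit
          simpa using hit
    -- master classification on basis vectors
    have master : ∀ i j : Fin n,
        θ (Pi.single i 1) (Pi.single j 1) = thetaStd n hn α (Pi.single i 1) (Pi.single j 1) := by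
      have tapply : ∀ x y : Fin n → ℂ, thetaStd n hn α x y =
          (α * (x (i0 n hn) * y (iN1 n hn) - x (iN1 n hn) * y (i0 n hn))) •
            (Pi.single (iN2 n hn) (1:ℂ) : Fin n → ℂ) := fun x y => rfl
      intro i j
      rw [tapply]
      simp only [Pi.single_apply]
      by_cases hi0 : (i:ℕ) = 0
      · rw [show i = i0 n hn from Fin.ext hi0]
        by_cases hj0 : (j:ℕ) = 0
        · rw [show j = i0 n hn from Fin.ext hj0]
          rw [if_pos rfl,
            if_neg (show iN1 n hn ≠ i0 n hn from Fin.ne_of_val_ne (show n - 1 ≠ 0 by omega))]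
          rw [skew0]
          norm_num
        · by_cases hjN : (j:ℕ) = n - 1
          · rw [show j = iN1 n hn from Fin.ext hjN]
            rw [if_pos rfl, if_pos rfl,
              if_neg (show iN1 n hn ≠ i0 n hn from Fin.ne_of_val_ne (show n - 1 ≠ 0 by omega)),
              if_neg (show i0 n hn ≠ iN1 n hn from Fin.ne_of_val_ne (show (0:ℕ) ≠ n - 1 by omega))]
            rw [h0N]
            norm_num
          · rw [show j = (⟨(j:ℕ), j.isLt⟩ : Fin n) from Fin.ext rfl]
            rw [if_pos rfl,
              if_neg (show iN1 n hn ≠ (⟨(j:ℕ), j.isLt⟩ : Fin n) from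
                Fin.ne_of_val_ne (show n - 1 ≠ (j:ℕ) by omega)),
              if_neg (show iN1 n hn ≠ i0 n hn from Fin.ne_of_val_ne (show n - 1 ≠ 0 by omega)),
              if_neg (show i0 n hn ≠ (⟨(j:ℕ), j.isLt⟩ : Fin n) from
                Fin.ne_of_val_ne (show (0:ℕ) ≠ (j:ℕ) by omega))]
            rw [hC (⟨(j:ℕ), j.isLt⟩ : Fin n) (by have := j.isLt; simp only [Fin.val_mk]; omega)
              (i0 n hn) (show (0:ℕ) ≤ n - 2 by omega)]
            norm_num
      · by_cases hiN : (i:ℕ) = n - 1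
        · rw [show i = iN1 n hn from Fin.ext hiN]
          by_cases hj0 : (j:ℕ) = 0
          · rw [show j = i0 n hn from Fin.ext hj0]
            rw [if_pos rfl, if_pos rfl,
              if_neg (show i0 n hn ≠ iN1 n hn from Fin.ne_of_val_ne (show (0:ℕ) ≠ n - 1 by omega)),
              if_neg (show iN1 n hn ≠ i0 n hn from Fin.ne_of_val_ne (show n - 1 ≠ 0 by omega))]
            rw [hN0]
            norm_num
          · by_cases hjN : (j:ℕ) = n - 1
            · rw [show j = iN1 n hn from Fin.ext hjN]
              rw [if_pos rfl,
                if_neg (show i0 n hn ≠ iN1 n hn from Fin.ne_of_val_ne (show (0:ℕ) ≠ n - 1 by omega))]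
              rw [skew0]
              norm_num
            · rw [show j = (⟨(j:ℕ), j.isLt⟩ : Fin n) from Fin.ext rfl]
              rw [if_pos rfl,
                if_neg (show i0 n hn ≠ iN1 n hn from Fin.ne_of_val_ne (show (0:ℕ) ≠ n - 1 by omega)),
                if_neg (show iN1 n hn ≠ (⟨(j:ℕ), j.isLt⟩ : Fin n) from
                  Fin.ne_of_val_ne (show n - 1 ≠ (j:ℕ) by omega)),
                if_neg (show i0 n hn ≠ (⟨(j:ℕ), j.isLt⟩ : Fin n) from
                  Fin.ne_of_val_ne (show (0:ℕ) ≠ (j:ℕ) by omega))]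
              rw [hskew (Pi.single (iN1 n hn) 1) (Pi.single (⟨(j:ℕ), j.isLt⟩ : Fin n) 1),
                hD (⟨(j:ℕ), j.isLt⟩ : Fin n) (by simp only [Fin.val_mk]; omega)
                  (by have := j.isLt; simp only [Fin.val_mk]; omega)]
              norm_num
        · -- middle i
          rw [show i = (⟨(i:ℕ), i.isLt⟩ : Fin n) from Fin.ext rfl]
          rw [if_neg (show i0 n hn ≠ (⟨(i:ℕ), i.isLt⟩ : Fin n) from
                Fin.ne_of_val_ne (show (0:ℕ) ≠ (i:ℕ) by omega)),
            if_neg (show iN1 n hn ≠ (⟨(i:ℕ), i.isLt⟩ : Fin n) from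
                Fin.ne_of_val_ne (show n - 1 ≠ (i:ℕ) by omega))]
          have hz : θ (Pi.single (⟨(i:ℕ), i.isLt⟩ : Fin n) 1) (Pi.single j 1) = 0 := by
            by_cases hjN : (j:ℕ) = n - 1
            · rw [show j = iN1 n hn from Fin.ext hjN]
              exact hD (⟨(i:ℕ), i.isLt⟩ : Fin n) (by simp only [Fin.val_mk]; omega)
                (by have := i.isLt; simp only [Fin.val_mk]; omega)
            · exact hC j (by have := j.isLt; omega) (⟨(i:ℕ), i.isLt⟩ : Fin n)
                (by have := i.isLt; simp only [Fin.val_mk]; omega)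
          rw [hz]
          norm_num
    refine ⟨α, fun x y => ?_⟩
    have hext : θ = thetaStd n hn α := bilin_ext n θ (thetaStd n hn α) master
    have hh : θ x y = thetaStd n hn α x y := by rw [hext]
    exact hh
  · rintro ⟨α, h⟩
    have h' : ∀ x y : Fin n → ℂ, θ x y =
        (α * (x (i0 n hn) * y (iN1 n hn) - x (iN1 n hn) * y (i0 n hn))) •
          (Pi.single (iN2 n hn) (1:ℂ) : Fin n → ℂ) := h
    have comp0 : ∀ x y : Fin n → ℂ, θ x y (i0 n hn) = 0 := by
      intro x y
      rw [h' x y, Pi.smul_apply,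
        Pi.single_eq_of_ne (show i0 n hn ≠ iN2 n hn from
          Fin.ne_of_val_ne (show (0:ℕ) ≠ n - 2 by omega)), smul_zero]
    have compN1 : ∀ x y : Fin n → ℂ, θ x y (iN1 n hn) = 0 := by
      intro x y
      rw [h' x y, Pi.smul_apply,
        Pi.single_eq_of_ne (show iN1 n hn ≠ iN2 n hn from
          Fin.ne_of_val_ne (show n - 1 ≠ n - 2 by omega)), smul_zero]
    refine ⟨?_, ?_, ?_⟩
    · intro x y
      rw [h' x y, h' y x, ← neg_smul]
      congr 1
      ring
    · intro x y z
      rw [h' (θ x y) z, h' (θ y z) x, h' (θ z x) y,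
        comp0 x y, comp0 y z, comp0 z x, compN1 x y, compN1 y z, compN1 z x]
      simp
    · intro x y z
      rw [h' (mu12 n x y) z, mul_at0 n hn x y, mul_atN1 n hn x y, h' x z, h' y z]
      rw [map_smul, LinearMap.smul_apply, mul_iN2 n hn y, map_smul, mul_iN2' n hn x]
      simp
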